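/- For three distinct processes P, Q, R, the MSC of the word v = snd(P,Q,m1) · rcv(P,Q,m1) · snd(Q,R,m2) · rcv(Q,R,m2) · snd(R,P,m3) · rcv(R,P,m3), where each send happens-before the next via the receiving process, with the additional constraint that P's send precedes P's receive, Q's receive precedes Q's send, and R's receive precedes R's send, and the cyclic dependency snd(P,Q,m1) ≤ rcv(R,P,m3) through all three processes, is half-duplex and 1-bounded but not 1-synchronisable and not 2-synchronisable; it is 3-synchronisable. -/

import Mathlib

/-- Events: `snd P Q m` is process `P` sending message `m` to `Q`;
    `rcv P Q m` is process `Q` receiving message `m` from `P`. -/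
inductive Ev where
  | snd : ℕ → ℕ → ℕ → Ev
  | rcv : ℕ → ℕ → ℕ → Ev
deriving DecidableEq

/-- Message values of send events on channel (P,Q) in w. -/
def sends (w : List Ev) (P Q : ℕ) : List ℕ :=
  w.filterMap fun e => match e with
    | .snd p q m => if p = P ∧ q = Q then some m else none
    | _ => none

/-- Message values of receive events on channel (P,Q) in w. -/
def recvs (w : List Ev) (P Q : ℕ) : List ℕ :=
  w.filterMap fun e => match e with
    | .rcv p q m => if p = P ∧ q = Q then some m else none
    | _ => none

def channelCompliant (w : List Ev) : Prop :=
  ∀ u, u <+: w → ∀ P Q, recvs u P Q <+: sends u P Q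

def complete (w : List Ev) : Prop :=
  ∀ P Q, sends w P Q = recvs w P Q

def bounded (B : ℕ) (w : List Ev) : Prop :=
  ∀ u, u <+: w → ∀ P Q, (sends u P Q).length ≤ (recvs u P Q).length + B

def halfDuplex (w : List Ev) : Prop :=
  ∀ u, u <+: w → ∀ P Q,
    sends u P Q = recvs u P Q ∨ sends u Q P = recvs u Q P

/-- Send at position i on channel (P,Q) is matched by receive at position j. -/
def Matches (w : List Ev) (P Q i j : ℕ) : Prop :=
  i < j ∧ j < w.length ∧
  (∃ m, w[i]? = some (.snd P Q m) ∧ w[j]? = some (.rcv P Q m)) ∧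
  sends (w.take (i+1)) P Q = recvs (w.take (j+1)) P Q

def IsSendAt (w : List Ev) (P Q i : ℕ) : Prop := ∃ m, w[i]? = some (Ev.snd P Q m)
def IsRcvAt (w : List Ev) (P Q i : ℕ) : Prop := ∃ m, w[i]? = some (Ev.rcv P Q m)
def MatchedAt (w : List Ev) (P Q i : ℕ) : Prop := ∃ j, Matches w P Q i j

/-- The process performing the event. -/
def actor : Ev → ℕ
  | .snd p _ _ => p
  | .rcv _ q _ => q

/-- Projection of a word onto the events of process X. -/
def proj (w : List Ev) (X : ℕ) : List Ev := w.filter (fun e => actor e == X)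

/-- Two words induce the same MSC (same per-process orders; with FIFO matching,
    this determines the matching). -/
def sameMSC (w v : List Ev) : Prop := ∀ X, proj w X = proj v X

/-- Existentially B-bounded: some linearisation of msc(w) is B-bounded. -/
def existBounded (B : ℕ) (w : List Ev) : Prop :=
  ∃ v, channelCompliant v ∧ sameMSC w v ∧ bounded B v

def isSnd : Ev → Prop
  | .snd _ _ _ => True
  | _ => False

def isRcv : Ev → Prop
  | .rcv _ _ _ => True
  | _ => False

/-- Positions i and j lie in the same block of the block decomposition. -/
def SameBlock (blocks : List (List Ev)) (i j : ℕ) : Prop :=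
  ∃ t, ((blocks.take t).flatten).length ≤ i ∧ j < ((blocks.take (t+1)).flatten).length

/-- w is k-synchronisable: some linearisation of msc(w) splits into blocks of
    at most k sends followed by at most k receives, with matched pairs co-located. -/
def kSynchronisable (k : ℕ) (w : List Ev) : Prop :=
  ∃ blocks : List (List Ev),
    channelCompliant blocks.flatten ∧ sameMSC w blocks.flatten ∧
    (∀ b ∈ blocks, ∃ s r, b = s ++ r ∧ s.length ≤ k ∧ r.length ≤ k ∧
      (∀ e ∈ s, isSnd e) ∧ (∀ e ∈ r, isRcv e)) ∧
    (∀ P Q i j, Matches blocks.flatten P Q i j → SameBlock blocks i j)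

/-- One step of the indistinguishability relation ∼. -/
inductive Sim1 : List Ev → List Ev → Prop
  | ss (u v : List Ev) (P Q R S m m' : ℕ) (h : P ≠ R) :
      Sim1 (u ++ Ev.snd P Q m :: Ev.snd R S m' :: v)
           (u ++ Ev.snd R S m' :: Ev.snd P Q m :: v)
  | rr (u v : List Ev) (P Q R S m m' : ℕ) (h : Q ≠ S) :
      Sim1 (u ++ Ev.rcv P Q m :: Ev.rcv R S m' :: v)
           (u ++ Ev.rcv R S m' :: Ev.rcv P Q m :: v)
  | sr (u v : List Ev) (P Q R S m m' : ℕ) (h1 : P ≠ S) (h2 : P ≠ R ∨ Q ≠ S) :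
      Sim1 (u ++ Ev.snd P Q m :: Ev.rcv R S m' :: v)
           (u ++ Ev.rcv R S m' :: Ev.snd P Q m :: v)
  | srSame (u v : List Ev) (P Q m m' : ℕ)
      (h : (recvs u P Q).length < (sends u P Q).length) :
      Sim1 (u ++ Ev.snd P Q m :: Ev.rcv P Q m' :: v)
           (u ++ Ev.rcv P Q m' :: Ev.snd P Q m :: v)

/-- The indistinguishability relation ∼ (finitely many swaps). -/
def Sim : List Ev → List Ev → Prop := Relation.ReflTransGen Sim1

namespace CyclicAux

open List

theorem filterMap_eq_replicate_count {α β : Type*} [DecidableEq α] {f : α → Option β} {a : α}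
    {m : β} (l : List α) (hfa : f a = some m) (h : ∀ e ∈ l, e ≠ a → f e = none) :
    l.filterMap f = List.replicate (l.count a) m := by
  induction l with
  | nil => rfl
  | cons e t ih =>
    by_cases he : e = a
    · subst he
      rw [List.filterMap_cons, hfa, List.count_cons_self, List.replicate_succ]
      exact congrArg _ (ih fun x hx => h x (List.mem_cons_of_mem _ hx))
    · rw [List.filterMap_cons, h e (List.mem_cons_self) he,
        List.count_cons_of_ne he]
      exact ih fun x hx => h x (List.mem_cons_of_mem _ hx)

theorem sameMSC_perm {w v : List Ev} (h : sameMSC w v) : w ~ v := by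
  rw [List.perm_iff_count]
  intro e
  have h1 := List.count_filter (l := w) (p := fun a => actor a == actor e) (a := e) (by simp)
  have h2 := List.count_filter (l := v) (p := fun a => actor a == actor e) (a := e) (by simp)
  rw [← h1, ← h2]
  exact congrArg (List.count e) (h (actor e))

theorem indexOf_lt_of_pair_sublist {a b : Ev} : ∀ {l : List Ev}, l.Nodup → [a, b] <+ l →
    l.idxOf a < l.idxOf b := by
  intro l
  induction l with
  | nil => intro _ h; exact absurd (h.subset (by simp)) (List.not_mem_nil (a := a))
  | cons c t ih =>
    intro hn h
    obtain ⟨hc, hn'⟩ := List.nodup_cons.mp hn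
    cases h with
    | cons _ h' =>
      have ha : a ∈ t := h'.subset (by simp)
      have hb : b ∈ t := h'.subset (by simp)
      rw [List.idxOf_cons_ne _ (fun hh => hc (by rw [hh]; exact ha)),
        List.idxOf_cons_ne _ (fun hh => hc (by rw [hh]; exact hb))]
      exact Nat.succ_lt_succ (ih hn' h')
    | cons_cons _ h'' =>
      have hb : b ∈ t := h''.subset (by simp)
      rw [List.idxOf_cons_self, List.idxOf_cons_ne _ (fun hh => hc (by rw [hh]; exact hb))]
      exact Nat.succ_pos _

theorem indexOf_ne_of_ne {l : List Ev} {a b : Ev} (ha : a ∈ l) (hb : b ∈ l) (h : a ≠ b) :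
    l.idxOf a ≠ l.idxOf b := by
  intro he
  apply h
  have h1 : l[l.idxOf a]? = some a := by
    rw [List.getElem?_eq_getElem (List.idxOf_lt_length_iff.mpr ha), List.getElem_idxOf]
  have h2 : l[l.idxOf b]? = some b := by
    rw [List.getElem?_eq_getElem (List.idxOf_lt_length_iff.mpr hb), List.getElem_idxOf]
  rw [he, h2] at h1
  exact (Option.some_injective _ h1).symm

theorem mem_take_of {α} {l : List α} {i n : ℕ} (hi : i < l.length) (h : i < n) :
    l[i] ∈ l.take n := by
  have hlt : i < (l.take n).length := by simp [List.length_take]; omega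
  have he : (l.take n)[i] = l[i] := List.getElem_take
  exact he ▸ List.getElem_mem hlt

theorem not_mem_take_of {α} [DecidableEq α] {l : List α} {a : α} {i n : ℕ}
    (hc : l.count a = 1) (hi : i < l.length) (ha : l[i] = a) (h : n ≤ i) : a ∉ l.take n := by
  intro hmem
  have h1 : 0 < (l.take n).count a := List.count_pos_iff.mpr hmem
  have h2 : 0 < (l.drop n).count a := by
    apply List.count_pos_iff.mpr
    have hlt : i - n < (l.drop n).length := by simp [List.length_drop]; omega
    have he : (l.drop n)[i - n] = l[n + (i - n)] := List.getElem_drop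
    have he2 : l[n + (i - n)] = a := by
      have : n + (i - n) = i := by omega
      simp_rw [this]; exact ha
    exact (he.trans he2) ▸ List.getElem_mem hlt
  have h3 : l.count a = (l.take n).count a + (l.drop n).count a := by
    rw [← List.count_append, List.take_append_drop]
  omega

theorem count_take_eq_one {α} [DecidableEq α] {l : List α} {a : α} {n : ℕ}
    (hmem : a ∈ l.take n) (hc : l.count a = 1) : (l.take n).count a = 1 := by
  have h1 : 0 < (l.take n).count a := List.count_pos_iff.mpr hmem
  have h2 := (l.take_sublist n).count_le a
  omega

theorem replicate_prefix {x : ℕ} {a b : ℕ} (h : a ≤ b) :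
    List.replicate a x <+: List.replicate b x :=
  ⟨List.replicate (b - a) x, by rw [← List.replicate_add]; congr 1; omega⟩

theorem build_matches {w : List Ev} {X Y mm : ℕ}
    (hcc : channelCompliant w)
    (hS : ∀ l, l <+ w → sends l X Y = List.replicate (l.count (Ev.snd X Y mm)) mm)
    (hR : ∀ l, l <+ w → recvs l X Y = List.replicate (l.count (Ev.rcv X Y mm)) mm)
    (hcs : w.count (Ev.snd X Y mm) = 1) (hcr : w.count (Ev.rcv X Y mm) = 1) :
    Matches w X Y (w.idxOf (Ev.snd X Y mm)) (w.idxOf (Ev.rcv X Y mm)) := by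
  have hs : Ev.snd X Y mm ∈ w := List.count_pos_iff.mp (by omega)
  have hr : Ev.rcv X Y mm ∈ w := List.count_pos_iff.mp (by omega)
  set a := Ev.snd X Y mm with ha
  set b := Ev.rcv X Y mm with hb
  set i := w.idxOf a with hidef
  set j := w.idxOf b with hjdef
  have hiw : i < w.length := List.idxOf_lt_length_iff.mpr hs
  have hjw : j < w.length := List.idxOf_lt_length_iff.mpr hr
  have wa : w[i] = a := List.getElem_idxOf hiw
  have wb : w[j] = b := List.getElem_idxOf hjw
  have hij : i ≠ j := indexOf_ne_of_ne hs hr (by simp [ha, hb])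
  have hlt : i < j := by
    rcases Nat.lt_or_ge i j with h | h
    · exact h
    · exfalso
      have hj1 : j + 1 ≤ i := by omega
      have hpre := hcc (w.take (j+1)) (w.take_prefix _) X Y
      rw [hS _ (List.take_sublist _ _), hR _ (List.take_sublist _ _)] at hpre
      have hbmem : b ∈ w.take (j+1) := wb ▸ mem_take_of hjw (by omega)
      rw [List.count_eq_zero.mpr (not_mem_take_of hcs hiw wa hj1),
        count_take_eq_one hbmem hcr] at hpre
      simpa using hpre.length_le
  refine ⟨hlt, hjw, ⟨mm, ?_, ?_⟩, ?_⟩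
  · rw [List.getElem?_eq_getElem hiw, wa]
  · rw [List.getElem?_eq_getElem hjw, wb]
  · rw [hS _ (List.take_sublist _ _), hR _ (List.take_sublist _ _),
      count_take_eq_one (wa ▸ mem_take_of hiw (by omega)) hcs,
      count_take_eq_one (wb ▸ mem_take_of hjw (by omega)) hcr]

end CyclicAux

namespace CyclicAux
open List

def uL (P Q R m1 m2 m3 : ℕ) : List Ev :=
  [Ev.snd P Q m1, Ev.snd Q R m2, Ev.snd R P m3,
   Ev.rcv P Q m1, Ev.rcv Q R m2, Ev.rcv R P m3]

variable {P Q R m1 m2 m3 : ℕ}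

theorem mem_uL_rot {e : Ev} (h : e ∈ uL P Q R m1 m2 m3) : e ∈ uL Q R P m2 m3 m1 := by
  simp only [uL, List.mem_cons, List.not_mem_nil, or_false] at h ⊢
  tauto

theorem sends_PQ (hPQ : P ≠ Q) (hQR : Q ≠ R) (hPR : P ≠ R) {l : List Ev}
    (hmem : ∀ e ∈ l, e ∈ uL P Q R m1 m2 m3) :
    sends l P Q = List.replicate (l.count (Ev.snd P Q m1)) m1 := by
  apply filterMap_eq_replicate_count
  · show (if P = P ∧ Q = Q then some m1 else none) = some m1
    simp
  · intro e he hne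
    have hm := hmem e he
    simp only [uL, List.mem_cons, List.not_mem_nil, or_false] at hm
    rcases hm with rfl | rfl | rfl | rfl | rfl | rfl
    · exact absurd rfl hne
    · show (if Q = P ∧ R = Q then some m2 else none) = none
      rw [if_neg (by omega)]
    · show (if R = P ∧ P = Q then some m3 else none) = none
      rw [if_neg (by omega)]
    · rfl
    · rfl
    · rfl

theorem recvs_PQ (hPQ : P ≠ Q) (hQR : Q ≠ R) (hPR : P ≠ R) {l : List Ev}
    (hmem : ∀ e ∈ l, e ∈ uL P Q R m1 m2 m3) :
    recvs l P Q = List.replicate (l.count (Ev.rcv P Q m1)) m1 := by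
  apply filterMap_eq_replicate_count
  · show (if P = P ∧ Q = Q then some m1 else none) = some m1
    simp
  · intro e he hne
    have hm := hmem e he
    simp only [uL, List.mem_cons, List.not_mem_nil, or_false] at hm
    rcases hm with rfl | rfl | rfl | rfl | rfl | rfl
    · rfl
    · rfl
    · rfl
    · exact absurd rfl hne
    · show (if Q = P ∧ R = Q then some m2 else none) = none
      rw [if_neg (by omega)]
    · show (if R = P ∧ P = Q then some m3 else none) = none
      rw [if_neg (by omega)]

theorem sends_none (hPQ : P ≠ Q) (hQR : Q ≠ R) (hPR : P ≠ R) {X Y : ℕ}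
    (h1 : ¬(X = P ∧ Y = Q)) (h2 : ¬(X = Q ∧ Y = R)) (h3 : ¬(X = R ∧ Y = P))
    {l : List Ev} (hmem : ∀ e ∈ l, e ∈ uL P Q R m1 m2 m3) : sends l X Y = [] := by
  rw [show sends l X Y = List.filterMap _ l from rfl, List.filterMap_eq_nil_iff]
  intro e he
  have hm := hmem e he
  simp only [uL, List.mem_cons, List.not_mem_nil, or_false] at hm
  rcases hm with rfl | rfl | rfl | rfl | rfl | rfl
  · show (if P = X ∧ Q = Y then some m1 else none) = none
    rw [if_neg (by omega)]
  · show (if Q = X ∧ R = Y then some m2 else none) = none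
    rw [if_neg (by omega)]
  · show (if R = X ∧ P = Y then some m3 else none) = none
    rw [if_neg (by omega)]
  · rfl
  · rfl
  · rfl

theorem recvs_none (hPQ : P ≠ Q) (hQR : Q ≠ R) (hPR : P ≠ R) {X Y : ℕ}
    (h1 : ¬(X = P ∧ Y = Q)) (h2 : ¬(X = Q ∧ Y = R)) (h3 : ¬(X = R ∧ Y = P))
    {l : List Ev} (hmem : ∀ e ∈ l, e ∈ uL P Q R m1 m2 m3) : recvs l X Y = [] := by
  rw [show recvs l X Y = List.filterMap _ l from rfl, List.filterMap_eq_nil_iff]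
  intro e he
  have hm := hmem e he
  simp only [uL, List.mem_cons, List.not_mem_nil, or_false] at hm
  rcases hm with rfl | rfl | rfl | rfl | rfl | rfl
  · rfl
  · rfl
  · rfl
  · show (if P = X ∧ Q = Y then some m1 else none) = none
    rw [if_neg (by omega)]
  · show (if Q = X ∧ R = Y then some m2 else none) = none
    rw [if_neg (by omega)]
  · show (if R = X ∧ P = Y then some m3 else none) = none
    rw [if_neg (by omega)]

theorem counts_uL (hPQ : P ≠ Q) (hQR : Q ≠ R) (hPR : P ≠ R) :
    (uL P Q R m1 m2 m3).count (Ev.snd P Q m1) = 1 ∧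
    (uL P Q R m1 m2 m3).count (Ev.snd Q R m2) = 1 ∧
    (uL P Q R m1 m2 m3).count (Ev.snd R P m3) = 1 ∧
    (uL P Q R m1 m2 m3).count (Ev.rcv P Q m1) = 1 ∧
    (uL P Q R m1 m2 m3).count (Ev.rcv Q R m2) = 1 ∧
    (uL P Q R m1 m2 m3).count (Ev.rcv R P m3) = 1 := by
  refine ⟨?_, ?_, ?_, ?_, ?_, ?_⟩ <;>
    simp [uL, List.count_cons, hPQ, hQR, hPR, Ne.symm hPQ, Ne.symm hQR, Ne.symm hPR]

theorem nodup_uL (hPQ : P ≠ Q) (hQR : Q ≠ R) (hPR : P ≠ R) :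
    (uL P Q R m1 m2 m3).Nodup := by
  simp [uL, hPQ, hQR, hPR, Ne.symm hPQ, Ne.symm hQR, Ne.symm hPR]

theorem proj_P (hPQ : P ≠ Q) (hQR : Q ≠ R) (hPR : P ≠ R) :
    proj (uL P Q R m1 m2 m3) P = [Ev.snd P Q m1, Ev.rcv R P m3] := by
  simp [proj, uL, actor, List.filter_cons, hPQ, hQR, hPR,
    Ne.symm hPQ, Ne.symm hQR, Ne.symm hPR]

theorem proj_Q (hPQ : P ≠ Q) (hQR : Q ≠ R) (hPR : P ≠ R) :
    proj (uL P Q R m1 m2 m3) Q = [Ev.snd Q R m2, Ev.rcv P Q m1] := by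
  simp [proj, uL, actor, List.filter_cons, hPQ, hQR, hPR,
    Ne.symm hPQ, Ne.symm hQR, Ne.symm hPR]

theorem proj_R (hPQ : P ≠ Q) (hQR : Q ≠ R) (hPR : P ≠ R) :
    proj (uL P Q R m1 m2 m3) R = [Ev.snd R P m3, Ev.rcv Q R m2] := by
  simp [proj, uL, actor, List.filter_cons, hPQ, hQR, hPR,
    Ne.symm hPQ, Ne.symm hQR, Ne.symm hPR]

end CyclicAux

namespace CyclicAux
open List

variable {P Q R m1 m2 m3 : ℕ}

theorem notSync (hPQ : P ≠ Q) (hQR : Q ≠ R) (hPR : P ≠ R) (blocks : List (List Ev))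
    (hcc : channelCompliant blocks.flatten)
    (hsm : sameMSC (uL P Q R m1 m2 m3) blocks.flatten)
    (hlen4 : ∀ b ∈ blocks, b.length ≤ 4)
    (hmatch : ∀ A B i j, Matches blocks.flatten A B i j → SameBlock blocks i j) : False := by
  set w := blocks.flatten with hw
  have hperm : uL P Q R m1 m2 m3 ~ w := sameMSC_perm hsm
  have hnd : w.Nodup := hperm.nodup_iff.mp (nodup_uL hPQ hQR hPR)
  obtain ⟨c1, c2, c3, c4, c5, c6⟩ := counts_uL (m1 := m1) (m2 := m2) (m3 := m3) hPQ hQR hPR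
  have hc1 : w.count (Ev.snd P Q m1) = 1 := by rw [← hperm.count_eq]; exact c1
  have hc2 : w.count (Ev.snd Q R m2) = 1 := by rw [← hperm.count_eq]; exact c2
  have hc3 : w.count (Ev.snd R P m3) = 1 := by rw [← hperm.count_eq]; exact c3
  have hc4 : w.count (Ev.rcv P Q m1) = 1 := by rw [← hperm.count_eq]; exact c4
  have hc5 : w.count (Ev.rcv Q R m2) = 1 := by rw [← hperm.count_eq]; exact c5
  have hc6 : w.count (Ev.rcv R P m3) = 1 := by rw [← hperm.count_eq]; exact c6
  have hmemw : ∀ e ∈ w, e ∈ uL P Q R m1 m2 m3 := fun e he => hperm.mem_iff.mpr he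
  -- channel characterisations on sublists of w
  have hSPQ : ∀ l, l <+ w → sends l P Q = List.replicate (l.count (Ev.snd P Q m1)) m1 :=
    fun l hl => sends_PQ hPQ hQR hPR (fun e he => hmemw e (hl.subset he))
  have hRPQ : ∀ l, l <+ w → recvs l P Q = List.replicate (l.count (Ev.rcv P Q m1)) m1 :=
    fun l hl => recvs_PQ hPQ hQR hPR (fun e he => hmemw e (hl.subset he))
  have hSQR : ∀ l, l <+ w → sends l Q R = List.replicate (l.count (Ev.snd Q R m2)) m2 :=
    fun l hl => sends_PQ hQR (Ne.symm hPR) (Ne.symm hPQ)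
      (fun e he => mem_uL_rot (hmemw e (hl.subset he)))
  have hRQR : ∀ l, l <+ w → recvs l Q R = List.replicate (l.count (Ev.rcv Q R m2)) m2 :=
    fun l hl => recvs_PQ hQR (Ne.symm hPR) (Ne.symm hPQ)
      (fun e he => mem_uL_rot (hmemw e (hl.subset he)))
  have hSRP : ∀ l, l <+ w → sends l R P = List.replicate (l.count (Ev.snd R P m3)) m3 :=
    fun l hl => sends_PQ (Ne.symm hPR) hPQ (Ne.symm hQR)
      (fun e he => mem_uL_rot (mem_uL_rot (hmemw e (hl.subset he))))
  have hRRP : ∀ l, l <+ w → recvs l R P = List.replicate (l.count (Ev.rcv R P m3)) m3 :=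
    fun l hl => recvs_PQ (Ne.symm hPR) hPQ (Ne.symm hQR)
      (fun e he => mem_uL_rot (mem_uL_rot (hmemw e (hl.subset he))))
  -- the three matched pairs
  have M1 := build_matches hcc hSPQ hRPQ hc1 hc4
  have M2 := build_matches hcc hSQR hRQR hc2 hc5
  have M3 := build_matches hcc hSRP hRRP hc3 hc6
  obtain ⟨t1, ht1l, ht1r⟩ := hmatch _ _ _ _ M1
  obtain ⟨t2, ht2l, ht2r⟩ := hmatch _ _ _ _ M2
  obtain ⟨t3, ht3l, ht3r⟩ := hmatch _ _ _ _ M3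
  -- block-prefix length function facts
  have hmono : ∀ s t : ℕ, s ≤ t →
      ((blocks.take s).flatten).length ≤ ((blocks.take t).flatten).length := by
    intro s t hst
    simp only [List.length_flatten, List.map_take]
    have hp := ((blocks.map List.length).take t).take_prefix s
    rw [List.take_take, min_eq_left hst] at hp
    exact hp.sublist.sum_le_sum (by simp)
  have hstep : ∀ t : ℕ,
      ((blocks.take (t+1)).flatten).length ≤ ((blocks.take t).flatten).length + 4 := by
    intro t
    by_cases ht : t < blocks.length
    · have heq : ((blocks.take (t+1)).flatten).length
          = ((blocks.take t).flatten).length + (blocks[t]).length := by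
        simp only [List.length_flatten, List.map_take]
        rw [← List.take_concat_get' (blocks.map List.length) t (by simpa)]
        simp
      rw [heq]
      have := hlen4 _ (List.getElem_mem ht)
      omega
    · rw [List.take_of_length_le (l := blocks) (by omega),
        List.take_of_length_le (l := blocks) (by omega)]
      omega
  -- per-process orderings
  have hsubP : [Ev.snd P Q m1, Ev.rcv R P m3] <+ w := by
    have h := hsm P
    rw [proj_P hPQ hQR hPR] at h
    rw [h]; exact List.filter_sublist
  have hsubQ : [Ev.snd Q R m2, Ev.rcv P Q m1] <+ w := by
    have h := hsm Q
    rw [proj_Q hPQ hQR hPR] at h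
    rw [h]; exact List.filter_sublist
  have hsubR : [Ev.snd R P m3, Ev.rcv Q R m2] <+ w := by
    have h := hsm R
    rw [proj_R hPQ hQR hPR] at h
    rw [h]; exact List.filter_sublist
  have o13 : w.idxOf (Ev.snd P Q m1) < w.idxOf (Ev.rcv R P m3) :=
    indexOf_lt_of_pair_sublist hnd hsubP
  have o21 : w.idxOf (Ev.snd Q R m2) < w.idxOf (Ev.rcv P Q m1) :=
    indexOf_lt_of_pair_sublist hnd hsubQ
  have o32 : w.idxOf (Ev.snd R P m3) < w.idxOf (Ev.rcv Q R m2) :=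
    indexOf_lt_of_pair_sublist hnd hsubR
  -- memberships
  have hm1 : Ev.snd P Q m1 ∈ w := List.count_pos_iff.mp (by omega)
  have hm2 : Ev.snd Q R m2 ∈ w := List.count_pos_iff.mp (by omega)
  have hm3 : Ev.snd R P m3 ∈ w := List.count_pos_iff.mp (by omega)
  have hm4 : Ev.rcv P Q m1 ∈ w := List.count_pos_iff.mp (by omega)
  have hm5 : Ev.rcv Q R m2 ∈ w := List.count_pos_iff.mp (by omega)
  have hm6 : Ev.rcv R P m3 ∈ w := List.count_pos_iff.mp (by omega)
  -- pairwise distinct indices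
  have d12 : w.idxOf (Ev.snd P Q m1) ≠ w.idxOf (Ev.snd Q R m2) :=
    indexOf_ne_of_ne hm1 hm2 (by simp <;> omega)
  have d13 : w.idxOf (Ev.snd P Q m1) ≠ w.idxOf (Ev.snd R P m3) :=
    indexOf_ne_of_ne hm1 hm3 (by simp <;> omega)
  have d23 : w.idxOf (Ev.snd Q R m2) ≠ w.idxOf (Ev.snd R P m3) :=
    indexOf_ne_of_ne hm2 hm3 (by simp <;> omega)
  have d45 : w.idxOf (Ev.rcv P Q m1) ≠ w.idxOf (Ev.rcv Q R m2) :=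
    indexOf_ne_of_ne hm4 hm5 (by simp <;> omega)
  have d46 : w.idxOf (Ev.rcv P Q m1) ≠ w.idxOf (Ev.rcv R P m3) :=
    indexOf_ne_of_ne hm4 hm6 (by simp <;> omega)
  have d56 : w.idxOf (Ev.rcv Q R m2) ≠ w.idxOf (Ev.rcv R P m3) :=
    indexOf_ne_of_ne hm5 hm6 (by simp <;> omega)
  have d14 : w.idxOf (Ev.snd P Q m1) ≠ w.idxOf (Ev.rcv P Q m1) :=
    indexOf_ne_of_ne hm1 hm4 (by simp)
  have d15 : w.idxOf (Ev.snd P Q m1) ≠ w.idxOf (Ev.rcv Q R m2) :=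
    indexOf_ne_of_ne hm1 hm5 (by simp)
  have d16 : w.idxOf (Ev.snd P Q m1) ≠ w.idxOf (Ev.rcv R P m3) :=
    indexOf_ne_of_ne hm1 hm6 (by simp)
  have d24 : w.idxOf (Ev.snd Q R m2) ≠ w.idxOf (Ev.rcv P Q m1) :=
    indexOf_ne_of_ne hm2 hm4 (by simp)
  have d25 : w.idxOf (Ev.snd Q R m2) ≠ w.idxOf (Ev.rcv Q R m2) :=
    indexOf_ne_of_ne hm2 hm5 (by simp)
  have d26 : w.idxOf (Ev.snd Q R m2) ≠ w.idxOf (Ev.rcv R P m3) :=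
    indexOf_ne_of_ne hm2 hm6 (by simp)
  have d34 : w.idxOf (Ev.snd R P m3) ≠ w.idxOf (Ev.rcv P Q m1) :=
    indexOf_ne_of_ne hm3 hm4 (by simp)
  have d35 : w.idxOf (Ev.snd R P m3) ≠ w.idxOf (Ev.rcv Q R m2) :=
    indexOf_ne_of_ne hm3 hm5 (by simp)
  have d36 : w.idxOf (Ev.snd R P m3) ≠ w.idxOf (Ev.rcv R P m3) :=
    indexOf_ne_of_ne hm3 hm6 (by simp)
  -- all three pairs lie in the same block
  have k12 : ¬ t1 < t2 := by
    intro h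
    have := hmono (t1+1) t2 h
    omega
  have k23 : ¬ t2 < t3 := by
    intro h
    have := hmono (t2+1) t3 h
    omega
  have k31 : ¬ t3 < t1 := by
    intro h
    have := hmono (t3+1) t1 h
    omega
  have he12 : t1 = t2 := by omega
  have he13 : t1 = t3 := by omega
  subst he12
  subst he13
  -- six distinct positions in a window of width ≤ 4
  have hM1 := M1.1
  have hM2 := M2.1
  have hM3 := M3.1
  have := hstep t1
  omega

end CyclicAux

namespace CyclicAux
open List

variable {P Q R m1 m2 m3 : ℕ}

theorem cc_uL (hPQ : P ≠ Q) (hQR : Q ≠ R) (hPR : P ≠ R) :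
    channelCompliant (uL P Q R m1 m2 m3) := by
  intro l hl X Y
  have hmem : ∀ e ∈ l, e ∈ uL P Q R m1 m2 m3 := fun e he => hl.sublist.subset he
  have hcnt : l.count (Ev.rcv P Q m1) ≤ l.count (Ev.snd P Q m1) ∧
      l.count (Ev.rcv Q R m2) ≤ l.count (Ev.snd Q R m2) ∧
      l.count (Ev.rcv R P m3) ≤ l.count (Ev.snd R P m3) := by
    obtain ⟨n, hn, rfl⟩ : ∃ n, n ≤ 6 ∧ l = (uL P Q R m1 m2 m3).take n :=
      ⟨l.length, by simpa [uL] using hl.length_le, List.prefix_iff_eq_take.mp hl⟩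
    interval_cases n <;>
      simp [uL, List.count_cons, hPQ, hQR, hPR, Ne.symm hPQ, Ne.symm hQR, Ne.symm hPR]
  by_cases h1 : X = P ∧ Y = Q
  · obtain ⟨rfl, rfl⟩ := h1
    rw [sends_PQ hPQ hQR hPR hmem, recvs_PQ hPQ hQR hPR hmem]
    exact replicate_prefix hcnt.1
  by_cases h2 : X = Q ∧ Y = R
  · obtain ⟨rfl, rfl⟩ := h2
    rw [sends_PQ hQR (Ne.symm hPR) (Ne.symm hPQ) (fun e he => mem_uL_rot (hmem e he)),
      recvs_PQ hQR (Ne.symm hPR) (Ne.symm hPQ) (fun e he => mem_uL_rot (hmem e he))]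
    exact replicate_prefix hcnt.2.1
  by_cases h3 : X = R ∧ Y = P
  · obtain ⟨rfl, rfl⟩ := h3
    rw [sends_PQ (Ne.symm hPR) hPQ (Ne.symm hQR)
        (fun e he => mem_uL_rot (mem_uL_rot (hmem e he))),
      recvs_PQ (Ne.symm hPR) hPQ (Ne.symm hQR)
        (fun e he => mem_uL_rot (mem_uL_rot (hmem e he)))]
    exact replicate_prefix hcnt.2.2
  · rw [sends_none hPQ hQR hPR h1 h2 h3 hmem, recvs_none hPQ hQR hPR h1 h2 h3 hmem]

theorem bounded_uL (hPQ : P ≠ Q) (hQR : Q ≠ R) (hPR : P ≠ R) :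
    bounded 1 (uL P Q R m1 m2 m3) := by
  intro l hl X Y
  have hmem : ∀ e ∈ l, e ∈ uL P Q R m1 m2 m3 := fun e he => hl.sublist.subset he
  obtain ⟨c1, c2, c3, _, _, _⟩ := counts_uL (m1 := m1) (m2 := m2) (m3 := m3) hPQ hQR hPR
  have b1 : l.count (Ev.snd P Q m1) ≤ 1 := c1 ▸ hl.sublist.count_le _
  have b2 : l.count (Ev.snd Q R m2) ≤ 1 := c2 ▸ hl.sublist.count_le _
  have b3 : l.count (Ev.snd R P m3) ≤ 1 := c3 ▸ hl.sublist.count_le _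
  by_cases h1 : X = P ∧ Y = Q
  · obtain ⟨rfl, rfl⟩ := h1
    rw [sends_PQ hPQ hQR hPR hmem]
    simp only [List.length_replicate]
    omega
  by_cases h2 : X = Q ∧ Y = R
  · obtain ⟨rfl, rfl⟩ := h2
    rw [sends_PQ hQR (Ne.symm hPR) (Ne.symm hPQ) (fun e he => mem_uL_rot (hmem e he))]
    simp only [List.length_replicate]
    omega
  by_cases h3 : X = R ∧ Y = P
  · obtain ⟨rfl, rfl⟩ := h3
    rw [sends_PQ (Ne.symm hPR) hPQ (Ne.symm hQR)
        (fun e he => mem_uL_rot (mem_uL_rot (hmem e he)))]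
    simp only [List.length_replicate]
    omega
  · rw [sends_none hPQ hQR hPR h1 h2 h3 hmem]
    simp

theorem hd_uL (hPQ : P ≠ Q) (hQR : Q ≠ R) (hPR : P ≠ R) (v : List Ev)
    (hsm : sameMSC (uL P Q R m1 m2 m3) v) : halfDuplex v := by
  intro l hl X Y
  have hperm := sameMSC_perm hsm
  have hmem : ∀ e ∈ l, e ∈ uL P Q R m1 m2 m3 :=
    fun e he => hperm.symm.subset (hl.sublist.subset he)
  by_cases h : (Y = P ∧ X = Q) ∨ (Y = Q ∧ X = R) ∨ (Y = R ∧ X = P)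
  · left
    rw [sends_none hPQ hQR hPR (by omega) (by omega) (by omega) hmem,
      recvs_none hPQ hQR hPR (by omega) (by omega) (by omega) hmem]
  · right
    rw [sends_none hPQ hQR hPR (by tauto) (by tauto) (by tauto) hmem,
      recvs_none hPQ hQR hPR (by tauto) (by tauto) (by tauto) hmem]

theorem sync3_uL (hPQ : P ≠ Q) (hQR : Q ≠ R) (hPR : P ≠ R) :
    kSynchronisable 3 (uL P Q R m1 m2 m3) := by
  refine ⟨[uL P Q R m1 m2 m3], ?_, ?_, ?_, ?_⟩
  · simpa using cc_uL (m1 := m1) (m2 := m2) (m3 := m3) hPQ hQR hPR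
  · intro X
    simp
  · intro b hb
    simp only [List.mem_singleton] at hb
    subst hb
    refine ⟨[Ev.snd P Q m1, Ev.snd Q R m2, Ev.snd R P m3],
      [Ev.rcv P Q m1, Ev.rcv Q R m2, Ev.rcv R P m3], rfl, by simp, by simp, ?_, ?_⟩
    · intro e he
      simp only [List.mem_cons, List.not_mem_nil, or_false] at he
      rcases he with rfl | rfl | rfl <;> trivial
    · intro e he
      simp only [List.mem_cons, List.not_mem_nil, or_false] at he
      rcases he with rfl | rfl | rfl <;> trivial
  · intro A B i j hM
    refine ⟨0, by simp, ?_⟩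
    have := hM.2.1
    simpa [uL] using this

end CyclicAux

/-- the cyclic 3-process MSC (P→Q, Q→R, R→P, each process sending
    before receiving) is half-duplex and existentially 1-bounded, not 1- or
    2-synchronisable, but 3-synchronisable. -/
theorem cyclic_three_process_example (P Q R m1 m2 m3 : ℕ)
    (hPQ : P ≠ Q) (hQR : Q ≠ R) (hPR : P ≠ R) :
    let u : List Ev := [Ev.snd P Q m1, Ev.snd Q R m2, Ev.snd R P m3,
      Ev.rcv P Q m1, Ev.rcv Q R m2, Ev.rcv R P m3]
    (∀ v, channelCompliant v → sameMSC u v → halfDuplex v) ∧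
    existBounded 1 u ∧
    ¬ kSynchronisable 1 u ∧ ¬ kSynchronisable 2 u ∧ kSynchronisable 3 u := by
  intro u
  refine ⟨fun v _ hsm => CyclicAux.hd_uL hPQ hQR hPR v hsm,
    ⟨u, CyclicAux.cc_uL hPQ hQR hPR, fun X => rfl, CyclicAux.bounded_uL hPQ hQR hPR⟩,
    ?_, ?_, CyclicAux.sync3_uL hPQ hQR hPR⟩
  · rintro ⟨blocks, hcc, hsm, hshape, hmatch⟩
    refine CyclicAux.notSync hPQ hQR hPR blocks hcc hsm ?_ hmatch
    intro b hb
    obtain ⟨s, r, rfl, hs, hr, _, _⟩ := hshape b hb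
    simp only [List.length_append]
    omega
  · rintro ⟨blocks, hcc, hsm, hshape, hmatch⟩
    refine CyclicAux.notSync hPQ hQR hPR blocks hcc hsm ?_ hmatch
    intro b hb
    obtain ⟨s, r, rfl, hs, hr, _, _⟩ := hshape b hb
    simp only [List.length_append]
    omega
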